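/- Let g : U → ℂ be holomorphic on a domain U ⊆ ℂ with a fixed point z₀ such that |g'(z₀)| = 1, and suppose there exist L > 0 and η > 0 such that |log |g'(x)|| ≤ L·|x − z₀| for all x ∈ B(z₀, η). Then for every δ > 0 and every α > 0 there exists n₀ such that for all n ≥ n₀, all i with 0 ≤ i ≤ n, and every r ≤ r₀·exp(−nδ) (for r₀ small enough), g^i maps B(z₀, r) into B(z₀, r·exp(nδα)). -/

import Mathlib

open Metric Function

/-- iterates of a holomorphic map with neutral fixed point move
exponentially small discs only slightly. -/
theorem stmt_0 (U : Set ℂ) (hU : IsOpen U) (g : ℂ → ℂ)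
    (hg : DifferentiableOn ℂ g U) (z₀ : ℂ) (hz₀ : z₀ ∈ U) (hfix : g z₀ = z₀)
    (hder : ‖deriv g z₀‖ = 1) (L η : ℝ) (hL : 0 < L) (hη : 0 < η)
    (hlip : ∀ x ∈ ball z₀ η, |Real.log ‖deriv g x‖| ≤ L * ‖x - z₀‖) :
    ∀ δ > (0:ℝ), ∀ α > (0:ℝ), ∃ r₀ > (0:ℝ), ∃ n₀ : ℕ, ∀ n ≥ n₀, ∀ i ≤ n,
      ∀ r : ℝ, 0 < r → r ≤ r₀ * Real.exp (-(n:ℝ) * δ) →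
        g^[i] '' ball z₀ r ⊆ ball z₀ (r * Real.exp ((n:ℝ) * δ * α)) := by
  intro δ hδ α hα
  set α' : ℝ := min α (1/2) with hα'def
  have hα'0 : 0 < α' := lt_min hα (by norm_num)
  have hα'le : α' ≤ α := min_le_left _ _
  have hα'half : α' ≤ 1/2 := min_le_right _ _
  -- derivative bound
  have hderiv_bd : ∀ y ∈ ball z₀ η, ‖deriv g y‖ ≤ Real.exp (L * ‖y - z₀‖) := by
    intro y hy
    rcases (norm_nonneg (deriv g y)).eq_or_lt with h0 | h0
    · rw [← h0]; exact (Real.exp_pos _).le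
    · calc ‖deriv g y‖ = Real.exp (Real.log ‖deriv g y‖) := (Real.exp_log h0).symm
        _ ≤ Real.exp (L * ‖y - z₀‖) :=
          Real.exp_le_exp.mpr ((le_abs_self _).trans (hlip y hy))
  obtain ⟨ε, hε0, hεU⟩ := Metric.isOpen_iff.mp hU z₀ hz₀
  set ρ : ℝ := min (ε/2) (η/2) with hρdef
  have hρ0 : 0 < ρ := lt_min (by linarith) (by linarith)
  have hρε : ρ < ε := lt_of_le_of_lt (min_le_left _ _) (by linarith)
  have hρη : ρ < η := lt_of_le_of_lt (min_le_right _ _) (by linarith)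
  obtain ⟨N, hN⟩ := exists_nat_gt (2*L*ρ/(δ*δ*α'))
  refine ⟨ρ, hρ0, N + 1, ?_⟩
  intro n hn i hi r hr hrle
  -- key numeric bound
  have hn1 : (1:ℝ) ≤ (n:ℝ) := by exact_mod_cast Nat.one_le_iff_ne_zero.mpr (by omega)
  have hnδ : 0 < (n:ℝ) * δ := by positivity
  have hkey : L * (ρ * Real.exp (-(n:ℝ) * δ / 2)) ≤ δ * α' := by
    have ht : (n:ℝ) * δ / 2 ≤ Real.exp ((n:ℝ) * δ / 2) := by
      linarith [Real.add_one_le_exp ((n:ℝ) * δ / 2)]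
    have hexp : Real.exp (-((n:ℝ) * δ / 2)) ≤ 1 / ((n:ℝ) * δ / 2) := by
      rw [Real.exp_neg, inv_eq_one_div]
      exact one_div_le_one_div_of_le (by positivity) ht
    have hNn : 2*L*ρ/(δ*δ*α') < (n:ℝ) := by
      have h : ((N:ℝ) + 1) ≤ n := by exact_mod_cast hn
      linarith
    have h2 : 2*L*ρ < (n:ℝ) * (δ*δ*α') := (div_lt_iff₀ (by positivity)).mp hNn
    have heq : -(n:ℝ) * δ / 2 = -((n:ℝ) * δ / 2) := by ring
    rw [heq]
    calc L * (ρ * Real.exp (-((n:ℝ) * δ / 2)))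
        ≤ L * (ρ * (1 / ((n:ℝ) * δ / 2))) := by
          apply mul_le_mul_of_nonneg_left _ hL.le
          exact mul_le_mul_of_nonneg_left hexp hρ0.le
      _ = 2*L*ρ/((n:ℝ)*δ) := by field_simp
      _ ≤ δ * α' := by rw [div_le_iff₀ hnδ]; nlinarith
  -- main induction
  have main : ∀ j, j ≤ n → ∀ x ∈ ball z₀ r, g^[j] x ∈ ball z₀ (r * Real.exp (j * (δ * α'))) := by
    intro j
    induction j with
    | zero =>
      intro _ x hx
      simpa using hx
    | succ j ih =>
      intro hj x hx
      have hx' := ih (by omega) x hx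
      set s : ℝ := r * Real.exp (j * (δ * α')) with hsdef
      have hs0 : 0 < s := by positivity
      -- s ≤ ρ * exp(-nδ/2)
      have hsbd : s ≤ ρ * Real.exp (-(n:ℝ) * δ / 2) := by
        have h1 : r ≤ ρ * Real.exp (-(n:ℝ) * δ) := hrle
        have h2 : Real.exp ((j:ℝ) * (δ * α')) ≤ Real.exp ((n:ℝ) * δ / 2) := by
          apply Real.exp_le_exp.mpr
          have hjn : (j:ℝ) ≤ n := by exact_mod_cast le_trans (Nat.le_succ j) hj
          have e1 : (j:ℝ)*(δ*α') ≤ (n:ℝ)*(δ*α') :=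
            mul_le_mul_of_nonneg_right hjn (by positivity)
          have e2 : ((n:ℝ)*δ)*α' ≤ ((n:ℝ)*δ)*(1/2) :=
            mul_le_mul_of_nonneg_left hα'half hnδ.le
          nlinarith
        calc s ≤ (ρ * Real.exp (-(n:ℝ) * δ)) * Real.exp ((n:ℝ) * δ / 2) := by
              apply mul_le_mul h1 h2 (Real.exp_pos _).le (by positivity)
          _ = ρ * Real.exp (-(n:ℝ) * δ / 2) := by
              rw [mul_assoc, ← Real.exp_add]; ring_nf
      have hsρ : s ≤ ρ := by
        have h1 : Real.exp (-(n:ℝ) * δ / 2) ≤ 1 := Real.exp_le_one_iff.mpr (by linarith)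
        calc s ≤ ρ * Real.exp (-(n:ℝ) * δ / 2) := hsbd
          _ ≤ ρ * 1 := mul_le_mul_of_nonneg_left h1 hρ0.le
          _ = ρ := mul_one ρ
      have hLs : L * s ≤ δ * α' :=
        le_trans (mul_le_mul_of_nonneg_left hsbd hL.le) hkey
      -- mean value on ball z₀ s
      have hball_sub : ball z₀ s ⊆ U := by
        intro y hy
        exact hεU (mem_ball.mpr (lt_of_lt_of_le (mem_ball.mp hy) (hsρ.trans hρε.le)))
      have hballη : ball z₀ s ⊆ ball z₀ η := ball_subset_ball (hsρ.trans hρη.le)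
      have hdiff : ∀ y ∈ ball z₀ s, DifferentiableAt ℂ g y := by
        intro y hy
        exact hg.differentiableAt (hU.mem_nhds (hball_sub hy))
      have hbd : ∀ y ∈ ball z₀ s, ‖deriv g y‖ ≤ Real.exp (L * s) := by
        intro y hy
        refine (hderiv_bd y (hballη hy)).trans (Real.exp_le_exp.mpr ?_)
        have h : ‖y - z₀‖ < s := by simpa [dist_eq_norm] using mem_ball.mp hy
        exact mul_le_mul_of_nonneg_left h.le hL.le
      have hz₀s : z₀ ∈ ball z₀ s := mem_ball_self hs0
      have hmvt := (convex_ball z₀ s).norm_image_sub_le_of_norm_deriv_le hdiff hbd hz₀s hx'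
      -- hmvt : ‖g (g^[j] x) - g z₀‖ ≤ exp (L*s) * ‖g^[j] x - z₀‖
      have hdist : dist (g^[j] x) z₀ < s := mem_ball.mp hx'
      rw [Function.iterate_succ_apply']
      rw [mem_ball, dist_eq_norm]
      calc ‖g (g^[j] x) - z₀‖ = ‖g (g^[j] x) - g z₀‖ := by rw [hfix]
        _ ≤ Real.exp (L * s) * ‖g^[j] x - z₀‖ := hmvt
        _ < Real.exp (L * s) * s := by
            apply (mul_lt_mul_iff_right₀ (Real.exp_pos _)).mpr
            simpa [dist_eq_norm] using hdist
        _ ≤ Real.exp (δ * α') * s := by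
            apply mul_le_mul_of_nonneg_right (Real.exp_le_exp.mpr hLs) hs0.le
        _ = r * Real.exp ((j+1 : ℕ) * (δ * α')) := by
            rw [mul_left_comm, ← Real.exp_add]
            congr 1
            push_cast
            ring
  intro y hy
  obtain ⟨x, hx, rfl⟩ := hy
  have := main i hi x hx
  refine ball_subset_ball ?_ this
  apply mul_le_mul_of_nonneg_left _ hr.le
  apply Real.exp_le_exp.mpr
  have hin : (i:ℝ) ≤ n := by exact_mod_cast hi
  have e1 : (i:ℝ)*(δ*α') ≤ (n:ℝ)*(δ*α') := mul_le_mul_of_nonneg_right hin (by positivity)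
  have e2 : ((n:ℝ)*δ)*α' ≤ ((n:ℝ)*δ)*α := mul_le_mul_of_nonneg_left hα'le hnδ.le
  nlinarith [e1, e2]
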